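/- Let p, q : ℝ^d → ℝ be differentiable at x ∈ ℝ^d with p(x) > 0 and q(x) > 0. Define c*(y) = p(y)/(p(y)+q(y)) and logit(u) = log(u/(1−u)). Then the function y ↦ logit(1 − c*(y)) is differentiable at x and its gradient satisfies ∇[logit(1 − c*)](x) = ∇(log q)(x) − ∇(log p)(x), i.e., the gradient of the logit of the optimal-classifier output equals the score difference between q and p at x. -/

import Mathlib

open Real

/-- The logit function `logit(u) = log(u/(1−u))`. -/
noncomputable def logit (u : ℝ) : ℝ := Real.log (u / (1 - u))

theorem logit_aux {a b : ℝ} (ha : 0 < a) (hb : 0 < b) :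
    logit (1 - a / (a + b)) = Real.log b - Real.log a := by
  have hab : 0 < a + b := by linarith
  have h1 : 1 - a / (a + b) = b / (a + b) := by field_simp; ring
  have h2 : 1 - b / (a + b) = a / (a + b) := by field_simp; ring
  have h3 : b / (a + b) / (a / (a + b)) = b / a := by field_simp
  rw [logit, h1, h2, h3, Real.log_div hb.ne' ha.ne']

/-- The central identity of DiffRatio: the gradient of the logit of the optimal
classifier output `c*(y) = p(y)/(p(y)+q(y))` equals the score difference
`∇ log q − ∇ log p` at any point where `p` and `q` are differentiable and positive. -/
theorem gradient_logit_eq_score_difference {d : ℕ} (p q : EuclideanSpace ℝ (Fin d) → ℝ)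
    (x : EuclideanSpace ℝ (Fin d))
    (hp_diff : DifferentiableAt ℝ p x) (hq_diff : DifferentiableAt ℝ q x)
    (hp_pos : 0 < p x) (hq_pos : 0 < q x) :
    DifferentiableAt ℝ (fun y => logit (1 - p y / (p y + q y))) x ∧
      gradient (fun y => logit (1 - p y / (p y + q y))) x =
        gradient (fun y => Real.log (q y)) x - gradient (fun y => Real.log (p y)) x := by
  have hp_ev : ∀ᶠ y in nhds x, 0 < p y :=
    (continuousAt_const (y := (0:ℝ))).eventually_lt hp_diff.continuousAt hp_pos
  have hq_ev : ∀ᶠ y in nhds x, 0 < q y :=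
    (continuousAt_const (y := (0:ℝ))).eventually_lt hq_diff.continuousAt hq_pos
  have heq : (fun y => logit (1 - p y / (p y + q y))) =ᶠ[nhds x]
      fun y => Real.log (q y) - Real.log (p y) := by
    filter_upwards [hp_ev, hq_ev] with y hpy hqy
    exact logit_aux hpy hqy
  have hdq : DifferentiableAt ℝ (fun y => Real.log (q y)) x := hq_diff.log hq_pos.ne'
  have hdp : DifferentiableAt ℝ (fun y => Real.log (p y)) x := hp_diff.log hp_pos.ne'
  have hd : DifferentiableAt ℝ (fun y => Real.log (q y) - Real.log (p y)) x := hdq.sub hdp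
  refine ⟨(heq.differentiableAt_iff).mpr hd, ?_⟩
  simp only [gradient, heq.fderiv_eq, fderiv_sub hdq hdp, map_sub]
  exact (congrArg (InnerProductSpace.toDual ℝ (EuclideanSpace ℝ (Fin d))).symm (fderiv_sub hdq hdp)).trans (map_sub _ _ _)
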